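/- arXiv:2406.05822 — 4 statements merged into one kernel-verified Lean document; each statement's English description precedes it below -/
import Mathlib

section
/- Let n, r be positive integers with r ≤ n, let U* ∈ ℝ^{n×r} have all row entries nonzero, set M* = U* U*ᵀ and Ω = {(i,j) ∈ [n]×[n] : M*_{ij} ≥ 0}, and define F(U) = (1/4)‖(U Uᵀ − M*)_Ω‖_F² for U ∈ ℝ^{n×r}. Suppose Assumptions 1 and 2 hold. Then U ∈ ℝ^{n×r} is a global minimizer of F over ℝ^{n×r} if and only if U Uᵀ = M*. -/
section Aux
open Matrix

lemma isUnit_of_rank_eq {r : ℕ} (G : Matrix (Fin r) (Fin r) ℝ) (h : G.rank = r) : IsUnit G := by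
  rw [← Matrix.mulVec_injective_iff_isUnit]
  have hrange : LinearMap.range G.mulVecLin = ⊤ := by
    apply Submodule.eq_top_of_finrank_eq
    simpa [Matrix.rank] using h
  have hsurj : Function.Surjective G.mulVecLin := LinearMap.range_eq_top.mp hrange
  exact (LinearMap.injective_iff_surjective).mpr hsurj

lemma gram_factor {K : Type*} [Fintype K] {r : ℕ} (A B : Matrix K (Fin r) ℝ)
    (hG : A * Aᵀ = B * Bᵀ) (hu : IsUnit (Bᵀ * B)) :
    ∃ Q : Matrix (Fin r) (Fin r) ℝ, Q * Qᵀ = 1 ∧ A = B * Q := by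
  set G := Bᵀ * B with hGdef
  have hdet : IsUnit G.det := (Matrix.isUnit_iff_isUnit_det G).mp hu
  have hGi : G⁻¹ * G = 1 := Matrix.nonsing_inv_mul G hdet
  have hGi' : G * G⁻¹ = 1 := Matrix.mul_nonsing_inv G hdet
  have hGsymm : Gᵀ = G := by rw [hGdef, Matrix.transpose_mul, Matrix.transpose_transpose]
  have hGinvT : (G⁻¹)ᵀ = G⁻¹ := by rw [Matrix.transpose_nonsing_inv, hGsymm]
  set P := B * G⁻¹ * Bᵀ with hPdef
  have hPT : Pᵀ = P := by
    rw [hPdef, Matrix.transpose_mul, Matrix.transpose_mul, Matrix.transpose_transpose, hGinvT,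
      Matrix.mul_assoc]
  have hPB : P * B = B := by
    rw [hPdef, Matrix.mul_assoc, ← hGdef, Matrix.mul_assoc, hGi, Matrix.mul_one]
  have hPBB : P * (B * Bᵀ) = B * Bᵀ := by
    rw [← Matrix.mul_assoc, hPB]
  have hBBP : (B * Bᵀ) * P = B * Bᵀ := by
    have := congrArg Matrix.transpose hPBB
    simpa [Matrix.transpose_mul, hPT, Matrix.mul_assoc] using this
  refine ⟨G⁻¹ * Bᵀ * A, ?_, ?_⟩
  · calc (G⁻¹ * Bᵀ * A) * (G⁻¹ * Bᵀ * A)ᵀ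
        = G⁻¹ * (Bᵀ * ((A * Aᵀ) * (B * G⁻¹))) := by
          simp [Matrix.transpose_mul, hGinvT, Matrix.mul_assoc]
      _ = G⁻¹ * (Bᵀ * ((B * Bᵀ) * (B * G⁻¹))) := by rw [hG]
      _ = (G⁻¹ * G) * ((G * G⁻¹)) := by simp [hGdef, Matrix.mul_assoc]
      _ = 1 := by rw [hGi, hGi', one_mul]
  · have hX : (A - P * A) * (A - P * A)ᵀ = 0 := by
      have expand : (A - P * A) * (A - P * A)ᵀ
          = (A * Aᵀ) - P * (A * Aᵀ) - ((A * Aᵀ) * P - P * ((A * Aᵀ) * P)) := by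
        rw [Matrix.transpose_sub, Matrix.transpose_mul, hPT]
        simp only [Matrix.sub_mul, Matrix.mul_sub, Matrix.mul_assoc]
      rw [expand, hG, hPBB, hBBP, hPBB]
      simp
    have hX0 : A - P * A = 0 := by
      have : (A - P * A) * (A - P * A)ᴴ = 0 := by
        rw [Matrix.conjTranspose_eq_transpose_of_trivial]; exact hX
      exact Matrix.self_mul_conjTranspose_eq_zero.mp this
    have hA : A = P * A := by rwa [sub_eq_zero] at hX0
    nth_rewrite 1 [hA]
    rw [hPdef]
    simp only [Matrix.mul_assoc]

lemma span_frob_zero {r : ℕ} (S : Set (Matrix (Fin r) (Fin r) ℝ)) (C : Matrix (Fin r) (Fin r) ℝ)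
    (hspan : Submodule.span ℝ S = ⊤)
    (hzero : ∀ X ∈ S, ∑ a, ∑ b, X a b * C a b = 0) : C = 0 := by
  let φ : Matrix (Fin r) (Fin r) ℝ →ₗ[ℝ] ℝ :=
    { toFun := fun X => ∑ a, ∑ b, X a b * C a b
      map_add' := fun X Y => by
        simp [Matrix.add_apply, add_mul, Finset.sum_add_distrib]
      map_smul' := fun c X => by
        simp [Matrix.smul_apply, Finset.mul_sum, smul_eq_mul, mul_assoc] }
  have hker : Submodule.span ℝ S ≤ LinearMap.ker φ := by
    rw [Submodule.span_le]
    intro X hX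
    exact hzero X hX
  rw [hspan, top_le_iff] at hker
  have hC : φ C = 0 := by
    have : C ∈ LinearMap.ker φ := by rw [hker]; trivial
    exact this
  have : ∑ a, ∑ b, C a b * C a b = 0 := hC
  ext a b
  have h1 : ∀ a : Fin r, 0 ≤ ∑ b, C a b * C a b :=
    fun a => Finset.sum_nonneg fun b _ => mul_self_nonneg _
  have h2 := (Finset.sum_eq_zero_iff_of_nonneg (fun a _ => h1 a)).mp this a (Finset.mem_univ a)
  have h3 := (Finset.sum_eq_zero_iff_of_nonneg
    (fun b _ => mul_self_nonneg (C a b))).mp h2 b (Finset.mem_univ b)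
  simpa [mul_self_eq_zero] using h3

end Aux



open Matrix Classical

noncomputable section

/-- Frobenius norm of a real matrix. -/
def frobNorm {m k : Type*} [Fintype m] [Fintype k] (A : Matrix m k ℝ) : ℝ :=
  Real.sqrt (∑ i, ∑ j, (A i j) ^ 2)

/-- Frobenius (trace) inner product ⟨A, B⟩ = trace(Aᵀ B). -/
def frobInner {m k : Type*} [Fintype m] [Fintype k] (A B : Matrix m k ℝ) : ℝ :=
  ∑ i, ∑ j, A i j * B i j

/-- `(X)_Ω`: keep entries in `Ω`, zero out the rest. -/
def mask {m : Type*} (Ω : Set (m × m)) (X : Matrix m m ℝ) : Matrix m m ℝ :=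
  Matrix.of fun i j => if (i, j) ∈ Ω then X i j else 0

/-- ReLU sampling set: the nonnegative entries of `M`. -/
def reluSet {n : ℕ} (M : Matrix (Fin n) (Fin n) ℝ) : Set (Fin n × Fin n) :=
  {p | 0 ≤ M p.1 p.2}

/-- The objective `F(U) = (1/4) ‖(U Uᵀ − M)_Ω‖_F²`. -/
def objF {n r : ℕ} (Ω : Set (Fin n × Fin n)) (M : Matrix (Fin n) (Fin n) ℝ)
    (U : Matrix (Fin n) (Fin r) ℝ) : ℝ :=
  (1 / 4) * frobNorm (mask Ω (U * Uᵀ - M)) ^ 2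

/-- Rows of `U` whose sign pattern is `s` (`s j = true` means positive entry). -/
def signBlock {n r : ℕ} (U : Matrix (Fin n) (Fin r) ℝ) (s : Fin r → Bool) : Set (Fin n) :=
  {k | ∀ j, (0 < U k j ↔ s j = true)}

/-- A Gray-code ordering of the `2^r` sign patterns: a bijective enumeration in which
consecutive patterns differ in exactly one coordinate. -/
def IsGrayCode {r : ℕ} (s : Fin (2 ^ r) → Fin r → Bool) : Prop :=
  Function.Bijective s ∧
    ∀ i : ℕ, ∀ h : i + 1 < 2 ^ r,
      ∃! j : Fin r, s ⟨i, Nat.lt_of_succ_lt h⟩ j ≠ s ⟨i + 1, h⟩ j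

/-- Assumption 1: each orthant submatrix `U*_i` has full column rank `r`. -/
def Assumption1 {n r : ℕ} (U : Matrix (Fin n) (Fin r) ℝ)
    (s : Fin (2 ^ r) → Fin r → Bool) : Prop :=
  ∀ i : Fin (2 ^ r),
    Matrix.rank (Matrix.of fun (k : ↥(signBlock U (s i))) (j : Fin r) => U k.1 j) = r

/-- Assumption 2: for consecutive orthants, the observed rank-one matrices
`u*_k (u*_l)ᵀ` with `(k,l) ∈ Ω_{i+1,i}` span `ℝ^{r×r}`. -/
def Assumption2 {n r : ℕ} (U : Matrix (Fin n) (Fin r) ℝ)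
    (s : Fin (2 ^ r) → Fin r → Bool) : Prop :=
  ∀ i : ℕ, ∀ h : i + 1 < 2 ^ r,
    Submodule.span ℝ
      {A : Matrix (Fin r) (Fin r) ℝ |
        ∃ k l : Fin n, k ∈ signBlock U (s ⟨i + 1, h⟩) ∧
          l ∈ signBlock U (s ⟨i, Nat.lt_of_succ_lt h⟩) ∧
          0 ≤ ∑ j, U k j * U l j ∧
          A = Matrix.of fun a b => U k a * U l b} = ⊤

/-- under ReLU sampling and Assumptions 1 and 2, `U` is a global
minimizer of `F` iff `U Uᵀ = M*`. -/
theorem statement0 {n r : ℕ} (hn : 0 < n) (hr : 0 < r) (hrn : r ≤ n)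
    (Ustar : Matrix (Fin n) (Fin r) ℝ) (hnz : ∀ k j, Ustar k j ≠ 0)
    (s : Fin (2 ^ r) → Fin r → Bool) (hs : IsGrayCode s)
    (hA1 : Assumption1 Ustar s) (hA2 : Assumption2 Ustar s)
    (U : Matrix (Fin n) (Fin r) ℝ) :
    (∀ W : Matrix (Fin n) (Fin r) ℝ,
        objF (reluSet (Ustar * Ustarᵀ)) (Ustar * Ustarᵀ) U ≤
          objF (reluSet (Ustar * Ustarᵀ)) (Ustar * Ustarᵀ) W) ↔
      U * Uᵀ = Ustar * Ustarᵀ := by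
  
  classical
  set Mstar := Ustar * Ustarᵀ with hMdef
  have h2r : 0 < 2 ^ r := pow_pos (by norm_num) r
  -- nonnegativity of the objective
  have hnn : ∀ W : Matrix (Fin n) (Fin r) ℝ, 0 ≤ objF (reluSet Mstar) Mstar W := by
    intro W
    unfold objF
    positivity
  -- value zero when W Wᵀ = Mstar
  have hzeroobj : ∀ W : Matrix (Fin n) (Fin r) ℝ, W * Wᵀ = Mstar →
      objF (reluSet Mstar) Mstar W = 0 := by
    intro W hW
    simp [objF, frobNorm, mask, hW, sub_self]
  constructor
  · intro hmin
    -- the minimum value is zero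
    have h0 : objF (reluSet Mstar) Mstar U = 0 := by
      refine le_antisymm ?_ (hnn U)
      have := hmin Ustar
      rwa [hzeroobj Ustar rfl] at this
    -- entrywise agreement on the observed set
    have hagree : ∀ k l : Fin n, 0 ≤ Mstar k l → (U * Uᵀ) k l = Mstar k l := by
      intro k l hkl
      set T := mask (reluSet Mstar) (U * Uᵀ - Mstar) with hTdef
      have hSnn : 0 ≤ ∑ i, ∑ j, (T i j) ^ 2 :=
        Finset.sum_nonneg fun i _ => Finset.sum_nonneg fun j _ => sq_nonneg _
      have hfrob : frobNorm T ^ 2 = ∑ i, ∑ j, (T i j) ^ 2 := Real.sq_sqrt hSnn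
      have hS0 : ∑ i, ∑ j, (T i j) ^ 2 = 0 := by
        unfold objF at h0
        rw [← hTdef] at h0
        rw [hfrob] at h0
        linarith
      have hT0 : T k l = 0 := by
        have h1 := (Finset.sum_eq_zero_iff_of_nonneg
          (fun i _ => Finset.sum_nonneg fun j _ => sq_nonneg (T i j))).mp hS0 k
          (Finset.mem_univ k)
        have h2 := (Finset.sum_eq_zero_iff_of_nonneg
          (fun j _ => sq_nonneg (T k j))).mp h1 l (Finset.mem_univ l)
        exact pow_eq_zero_iff (by norm_num) |>.mp h2
      have hmem : (k, l) ∈ reluSet Mstar := hkl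
      have : (U * Uᵀ - Mstar) k l = 0 := by
        rw [hTdef] at hT0
        simpa [mask, hmem] using hT0
      have := sub_eq_zero.mp (by simpa [Matrix.sub_apply] using this)
      exact this
    -- positivity within a sign block
    have hblockpos : ∀ i : Fin (2 ^ r), ∀ k l : Fin n,
        k ∈ signBlock Ustar (s i) → l ∈ signBlock Ustar (s i) → 0 ≤ Mstar k l := by
      intro i k l hk hl
      have hterm : ∀ j, 0 ≤ Ustar k j * Ustar l j := by
        intro j
        by_cases hb : s i j = true
        · exact le_of_lt (mul_pos ((hk j).mpr hb) ((hl j).mpr hb))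
        · have hk' : Ustar k j < 0 :=
            lt_of_le_of_ne (not_lt.mp fun h => hb ((hk j).mp h)) (hnz k j)
          have hl' : Ustar l j < 0 :=
            lt_of_le_of_ne (not_lt.mp fun h => hb ((hl j).mp h)) (hnz l j)
          exact le_of_lt (mul_pos_of_neg_of_neg hk' hl')
      have : Mstar k l = ∑ j, Ustar k j * Ustar l j := by
        simp [hMdef, Matrix.mul_apply, Matrix.transpose_apply]
      rw [this]
      exact Finset.sum_nonneg fun j _ => hterm j
    -- orthogonal factor on each block
    have main : ∀ i : Fin (2 ^ r), ∃ Q : Matrix (Fin r) (Fin r) ℝ, Q * Qᵀ = 1 ∧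
        ∀ k : Fin n, k ∈ signBlock Ustar (s i) →
          ∀ j, U k j = ∑ a, Ustar k a * Q a j := by
      intro i
      haveI : Fintype ↥(signBlock Ustar (s i)) := Fintype.ofFinite _
      set Bm : Matrix ↥(signBlock Ustar (s i)) (Fin r) ℝ :=
        Matrix.of fun k j => Ustar k.1 j with hBmdef
      set Am : Matrix ↥(signBlock Ustar (s i)) (Fin r) ℝ :=
        Matrix.of fun k j => U k.1 j with hAmdef
      have hGram : Am * Amᵀ = Bm * Bmᵀ := by
        ext k l
        have h1 : 0 ≤ Mstar k.1 l.1 := hblockpos i k.1 l.1 k.2 l.2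
        have h2 := hagree k.1 l.1 h1
        simpa [hAmdef, hBmdef, hMdef, Matrix.mul_apply, Matrix.transpose_apply] using h2
      have hrank : Bm.rank = r := hA1 i
      have hu : IsUnit (Bmᵀ * Bm) := by
        apply isUnit_of_rank_eq
        rw [Matrix.rank_transpose_mul_self, hrank]
      obtain ⟨Qi, hQ1, hQ2⟩ := gram_factor Am Bm hGram hu
      refine ⟨Qi, hQ1, fun k hk j => ?_⟩
      have := congrFun (congrFun hQ2 ⟨k, hk⟩) j
      simpa [hAmdef, hBmdef, Matrix.mul_apply] using this
    choose Q hQorth hQrow using main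
    -- adjacency: consecutive Gray-code blocks share the same orthogonal factor
    have hadj : ∀ i : ℕ, ∀ h : i + 1 < 2 ^ r,
        Q ⟨i + 1, h⟩ = Q ⟨i, Nat.lt_of_succ_lt h⟩ := by
      intro i h
      set i1 : Fin (2 ^ r) := ⟨i + 1, h⟩ with hi1
      set i0 : Fin (2 ^ r) := ⟨i, Nat.lt_of_succ_lt h⟩ with hi0
      set R : Matrix (Fin r) (Fin r) ℝ := Q i1 * (Q i0)ᵀ with hRdef
      have hcalc : ∀ (Q1 Q2 : Matrix (Fin r) (Fin r) ℝ) (x y : Fin r → ℝ),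
          ∑ j, (∑ a, x a * Q1 a j) * (∑ b, y b * Q2 b j)
            = ∑ a, ∑ b, (x a * y b) * (∑ j, Q1 a j * Q2 b j) := by
        intro Q1 Q2 x y
        calc ∑ j, (∑ a, x a * Q1 a j) * (∑ b, y b * Q2 b j)
            = ∑ j, ∑ a, ∑ b, (x a * Q1 a j) * (y b * Q2 b j) := by
              refine Finset.sum_congr rfl fun j _ => ?_
              rw [Finset.sum_mul_sum]
          _ = ∑ a, ∑ j, ∑ b, (x a * Q1 a j) * (y b * Q2 b j) := Finset.sum_comm
          _ = ∑ a, ∑ b, ∑ j, (x a * Q1 a j) * (y b * Q2 b j) :=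
              Finset.sum_congr rfl fun a _ => Finset.sum_comm
          _ = ∑ a, ∑ b, (x a * y b) * (∑ j, Q1 a j * Q2 b j) := by
              refine Finset.sum_congr rfl fun a _ => Finset.sum_congr rfl fun b _ => ?_
              rw [Finset.mul_sum]
              exact Finset.sum_congr rfl fun j _ => by ring
      have hC : R - 1 = 0 := by
        apply span_frob_zero _ _ (hA2 i h)
        rintro X ⟨k, l, hk, hl, hpos, rfl⟩
        have hMkl : 0 ≤ Mstar k l := by
          have : Mstar k l = ∑ j, Ustar k j * Ustar l j := by
            simp [hMdef, Matrix.mul_apply, Matrix.transpose_apply]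
          rw [this]; exact hpos
        have hUkl : (U * Uᵀ) k l = Mstar k l := hagree k l hMkl
        have hrow1 : ∀ j, U k j = ∑ a, Ustar k a * Q i1 a j := hQrow i1 k hk
        have hrow0 : ∀ j, U l j = ∑ b, Ustar l b * Q i0 b j := hQrow i0 l hl
        have hpart1 : ∑ a, ∑ b, (Matrix.of fun a b => Ustar k a * Ustar l b) a b * R a b
            = (U * Uᵀ) k l := by
          have : (U * Uᵀ) k l = ∑ j, U k j * U l j := by
            simp [Matrix.mul_apply, Matrix.transpose_apply]
          rw [this]
          simp only [Matrix.of_apply, hRdef, Matrix.mul_apply, Matrix.transpose_apply]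
          rw [show (∑ j, U k j * U l j)
              = ∑ j, (∑ a, Ustar k a * Q i1 a j) * (∑ b, Ustar l b * Q i0 b j) from
            Finset.sum_congr rfl fun j _ => by rw [hrow1 j, hrow0 j]]
          rw [hcalc]
        have hpart2 : ∑ a, ∑ b, (Matrix.of fun a b => Ustar k a * Ustar l b) a b *
            (1 : Matrix (Fin r) (Fin r) ℝ) a b = Mstar k l := by
          simp only [Matrix.of_apply, Matrix.one_apply, mul_ite, mul_one, mul_zero]
          rw [show Mstar k l = ∑ a, Ustar k a * Ustar l a by
            simp [hMdef, Matrix.mul_apply, Matrix.transpose_apply]]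
          refine Finset.sum_congr rfl fun a _ => ?_
          simp
        have hsplit : ∑ a, ∑ b, (Matrix.of fun a b => Ustar k a * Ustar l b) a b * (R - 1) a b
            = (∑ a, ∑ b, (Matrix.of fun a b => Ustar k a * Ustar l b) a b * R a b)
              - ∑ a, ∑ b, (Matrix.of fun a b => Ustar k a * Ustar l b) a b *
                  (1 : Matrix (Fin r) (Fin r) ℝ) a b := by
          simp only [Matrix.sub_apply, mul_sub, Finset.sum_sub_distrib]
        rw [hsplit, hpart1, hpart2, hUkl, sub_self]
      have hR1 : Q i1 * (Q i0)ᵀ = 1 := by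
        have := sub_eq_zero.mp hC
        rwa [hRdef] at this
      have hQ0 : (Q i0)ᵀ * Q i0 = 1 := mul_eq_one_comm.mp (hQorth i0)
      calc Q i1 = Q i1 * ((Q i0)ᵀ * Q i0) := by rw [hQ0, Matrix.mul_one]
        _ = (Q i1 * (Q i0)ᵀ) * Q i0 := by rw [Matrix.mul_assoc]
        _ = Q i0 := by rw [hR1, Matrix.one_mul]
    -- all factors coincide with the first one
    have hconst : ∀ m : ℕ, ∀ hm : m < 2 ^ r, Q ⟨m, hm⟩ = Q ⟨0, h2r⟩ := by
      intro m
      induction m with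
      | zero => intro hm; rfl
      | succ p ih =>
        intro hm
        rw [hadj p hm, ih (Nat.lt_of_succ_lt hm)]
    set Q0 := Q ⟨0, h2r⟩ with hQ0def
    have hQi : ∀ i : Fin (2 ^ r), Q i = Q0 := by
      intro i
      have := hconst i.1 i.2
      simpa using this
    -- U = Ustar * Q0
    have hUeq : U = Ustar * Q0 := by
      ext k j
      obtain ⟨i, hi⟩ := hs.1.2 fun j => decide (0 < Ustar k j)
      have hk : k ∈ signBlock Ustar (s i) := by
        intro j
        rw [hi]
        exact ⟨fun h => decide_eq_true h, fun h => of_decide_eq_true h⟩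
      have hrow := hQrow i k hk j
      rw [hrow, hQi i]
      simp [Matrix.mul_apply]
    rw [hUeq, hMdef]
    have hT : (Ustar * Q0)ᵀ = Q0ᵀ * Ustarᵀ := Matrix.transpose_mul _ _
    rw [hT]
    calc Ustar * Q0 * (Q0ᵀ * Ustarᵀ) = Ustar * (Q0 * (Q0ᵀ * Ustarᵀ)) := by
          rw [Matrix.mul_assoc]
      _ = Ustar * ((Q0 * Q0ᵀ) * Ustarᵀ) := by rw [Matrix.mul_assoc]
      _ = Ustar * Ustarᵀ := by rw [hQorth _, Matrix.one_mul]
  · intro hUU W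
    have h0 : objF (reluSet Mstar) Mstar U = 0 := hzeroobj U hUU
    rw [h0]
    exact hnn W
end
end

section
/- Let n, r be positive integers with r ≤ n, let U* ∈ ℝ^{n×r} have all row entries nonzero, set M* = U* U*ᵀ and Ω = {(i,j) ∈ [n]×[n] : M*_{ij} ≥ 0}. Suppose Assumptions 1 and 2 hold. If U ∈ ℝ^{n×r} satisfies (U Uᵀ)_Ω = (M*)_Ω (entrywise equality on Ω), then there exists an orthogonal matrix Q ∈ ℝ^{r×r} (QᵀQ = I_r) such that U = U* Q; in particular U Uᵀ = M*. -/
open Matrix Classical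

noncomputable section

/-- A square real matrix of full rank has invertible determinant. -/
lemma aux_isUnit_det_of_rank {r : ℕ} (G : Matrix (Fin r) (Fin r) ℝ) (h : G.rank = r) :
    IsUnit G.det := by
  rw [isUnit_iff_ne_zero]
  intro hdet
  obtain ⟨v, hv, hGv⟩ := Matrix.exists_mulVec_eq_zero_iff.mpr hdet
  have hsurj : Function.Surjective G.mulVecLin := by
    rw [← LinearMap.range_eq_top]
    apply Submodule.eq_top_of_finrank_eq
    have : Module.finrank ℝ (LinearMap.range G.mulVecLin) = G.rank := rfl
    rw [this, h]
    simp [Module.finrank_fintype_fun_eq_card]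
  have hinj : Function.Injective G.mulVecLin :=
    LinearMap.injective_iff_surjective.mpr hsurj
  apply hv
  have : G.mulVecLin v = G.mulVecLin 0 := by
    simpa [Matrix.mulVecLin_apply] using hGv
  exact hinj this

/-- If `W Wᵀ = V Vᵀ` and `Vᵀ V` is invertible, then `W = V Q` with `Q` orthogonal. -/
lemma aux_exists_orth {m : Type} [Fintype m] {r : ℕ} (V W : Matrix m (Fin r) ℝ)
    (hG : IsUnit (Vᵀ * V).det) (h : W * Wᵀ = V * Vᵀ) :
    ∃ Q : Matrix (Fin r) (Fin r) ℝ, Qᵀ * Q = 1 ∧ Q * Qᵀ = 1 ∧ W = V * Q := by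
  classical
  set Gi : Matrix (Fin r) (Fin r) ℝ := (Vᵀ * V)⁻¹ with hGi
  have h1 : (Vᵀ * V) * Gi = 1 := Matrix.mul_nonsing_inv _ hG
  have h2 : Gi * (Vᵀ * V) = 1 := Matrix.nonsing_inv_mul _ hG
  have hGiT : Giᵀ = Gi := by
    rw [hGi, Matrix.transpose_nonsing_inv]
    congr 1
    rw [Matrix.transpose_mul, Matrix.transpose_transpose]
  set Q : Matrix (Fin r) (Fin r) ℝ := Gi * (Vᵀ * W) with hQ
  have hWW : ∀ {k : Type} (X : Matrix m k ℝ), W * (Wᵀ * X) = V * (Vᵀ * X) := by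
    intro k X
    rw [← Matrix.mul_assoc, h, Matrix.mul_assoc]
  have hcan : ∀ {k : Type} (X : Matrix (Fin r) k ℝ), Gi * (Vᵀ * (V * X)) = X := by
    intro k X
    rw [← Matrix.mul_assoc Vᵀ V X, ← Matrix.mul_assoc, h2, Matrix.one_mul]
  have hcan2 : ∀ {k : Type} (X : Matrix (Fin r) k ℝ), Vᵀ * (V * (Gi * X)) = X := by
    intro k X
    rw [← Matrix.mul_assoc V Gi X, ← Matrix.mul_assoc, ← Matrix.mul_assoc, h1, Matrix.one_mul]
  have t2 : W * (V * Q)ᵀ = V * Vᵀ := by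
    calc W * (V * Q)ᵀ = W * (Wᵀ * (V * (Gi * Vᵀ))) := by
          simp only [hQ, Matrix.transpose_mul, Matrix.transpose_transpose, hGiT, Matrix.mul_assoc]
      _ = V * (Vᵀ * (V * (Gi * Vᵀ))) := hWW _
      _ = V * Vᵀ := by rw [hcan2]
  have t3 : (V * Q) * Wᵀ = V * Vᵀ := by
    calc (V * Q) * Wᵀ = V * (Gi * (Vᵀ * (W * Wᵀ))) := by
          simp only [hQ, Matrix.mul_assoc]
      _ = V * (Gi * (Vᵀ * (V * Vᵀ))) := by rw [h]
      _ = V * Vᵀ := by rw [hcan]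
  have t4 : (V * Q) * (V * Q)ᵀ = V * Vᵀ := by
    calc (V * Q) * (V * Q)ᵀ
        = V * (Gi * (Vᵀ * (W * (Wᵀ * (V * (Gi * Vᵀ)))))) := by
          simp only [hQ, Matrix.transpose_mul, Matrix.transpose_transpose, hGiT, Matrix.mul_assoc]
      _ = V * (Gi * (Vᵀ * (V * (Vᵀ * (V * (Gi * Vᵀ)))))) := by rw [hWW]
      _ = V * (Gi * (Vᵀ * (V * Vᵀ))) := by rw [hcan2]
      _ = V * Vᵀ := by rw [hcan]
  have hDzero : W - V * Q = 0 := by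
    have key : (W - V * Q) * (W - V * Q)ᵀ = 0 := by
      rw [Matrix.transpose_sub, Matrix.sub_mul, Matrix.mul_sub, Matrix.mul_sub,
        h, t2, t3, t4]
      simp
    have key' : (W - V * Q) * (W - V * Q)ᴴ = 0 := by
      rwa [Matrix.conjTranspose_eq_transpose_of_trivial]
    exact Matrix.self_mul_conjTranspose_eq_zero.mp key'
  have hW : W = V * Q := sub_eq_zero.mp hDzero
  have hQQ : Q * Qᵀ = 1 := by
    have e : Q * Qᵀ = Gi * (Vᵀ * (W * (Wᵀ * (V * Gi)))) := by
      simp only [hQ, Matrix.transpose_mul, Matrix.transpose_transpose, hGiT, Matrix.mul_assoc]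
    rw [e, hWW, hcan, ← Matrix.mul_assoc, h1]
  exact ⟨Q, mul_eq_one_comm.mp hQQ, hQQ, hW⟩

/-- A matrix Frobenius-orthogonal to a spanning set is zero. -/
lemma aux_span_frob {r : ℕ} (X : Matrix (Fin r) (Fin r) ℝ)
    (S : Set (Matrix (Fin r) (Fin r) ℝ)) (hspan : Submodule.span ℝ S = ⊤)
    (hvan : ∀ A ∈ S, ∑ a, ∑ b, A a b * X a b = 0) : X = 0 := by
  classical
  let φ : Matrix (Fin r) (Fin r) ℝ →ₗ[ℝ] ℝ :=
    { toFun := fun A => ∑ a, ∑ b, A a b * X a b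
      map_add' := by
        intro A B
        simp [Matrix.add_apply, add_mul, Finset.sum_add_distrib]
      map_smul' := by
        intro c A
        simp [Matrix.smul_apply, smul_eq_mul, mul_assoc, Finset.mul_sum] }
  have hker : Submodule.span ℝ S ≤ LinearMap.ker φ :=
    Submodule.span_le.mpr fun A hA => LinearMap.mem_ker.mpr (hvan A hA)
  have hX : φ X = 0 := by
    have : X ∈ Submodule.span ℝ S := by rw [hspan]; exact Submodule.mem_top
    exact LinearMap.mem_ker.mp (hker this)
  have h2 : ∑ a, ∑ b, X a b * X a b = 0 := hX
  ext a b
  have hnn : ∀ a ∈ (Finset.univ : Finset (Fin r)), (0:ℝ) ≤ ∑ b, X a b * X a b :=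
    fun a _ => Finset.sum_nonneg fun b _ => mul_self_nonneg _
  have ha := (Finset.sum_eq_zero_iff_of_nonneg hnn).mp h2 a (Finset.mem_univ a)
  have hb := (Finset.sum_eq_zero_iff_of_nonneg
    (fun b _ => mul_self_nonneg (X a b))).mp ha b (Finset.mem_univ b)
  simpa using mul_self_eq_zero.mp hb

/-- under ReLU sampling and Assumptions 1 and 2, any `U` matching the
observed entries equals `U* Q` for an orthogonal `Q`; in particular `U Uᵀ = M*`. -/
theorem statement1 {n r : ℕ} (hn : 0 < n) (hr : 0 < r) (hrn : r ≤ n)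
    (Ustar : Matrix (Fin n) (Fin r) ℝ) (hnz : ∀ k j, Ustar k j ≠ 0)
    (s : Fin (2 ^ r) → Fin r → Bool) (hs : IsGrayCode s)
    (hA1 : Assumption1 Ustar s) (hA2 : Assumption2 Ustar s)
    (U : Matrix (Fin n) (Fin r) ℝ)
    (hfit : mask (reluSet (Ustar * Ustarᵀ)) (U * Uᵀ) =
      mask (reluSet (Ustar * Ustarᵀ)) (Ustar * Ustarᵀ)) :
    ∃ Q : Matrix (Fin r) (Fin r) ℝ, Qᵀ * Q = 1 ∧ U = Ustar * Q ∧
      U * Uᵀ = Ustar * Ustarᵀ := by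
  
  classical
  haveI : Nonempty (Fin r) := ⟨⟨0, hr⟩⟩
  set M : Matrix (Fin n) (Fin n) ℝ := Ustar * Ustarᵀ with hM
  have hUU : ∀ k l, (U * Uᵀ) k l = ∑ j, U k j * U l j := by
    intro k l; simp [Matrix.mul_apply]
  have hMM : ∀ k l, M k l = ∑ j, Ustar k j * Ustar l j := by
    intro k l; simp [hM, Matrix.mul_apply]
  have hobs : ∀ k l, 0 ≤ M k l → ∑ j, U k j * U l j = ∑ j, Ustar k j * Ustar l j := by
    intro k l h0
    have := congrFun (congrFun hfit k) l
    simp only [mask, Matrix.of_apply, reluSet, Set.mem_setOf_eq] at this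
    rw [if_pos h0, if_pos h0] at this
    rw [← hUU, ← hMM, this]
  -- every row lies in some sign block
  have hmem : ∀ k : Fin n, ∃ i : Fin (2 ^ r), k ∈ signBlock Ustar (s i) := by
    intro k
    obtain ⟨i, hi⟩ := hs.1.2 (fun j => decide (0 < Ustar k j))
    refine ⟨i, fun j => ?_⟩
    rw [hi]
    simp
  choose idx hidx using hmem
  -- within a block all inner products are positive
  have hposterm : ∀ (i : Fin (2 ^ r)) (k l : Fin n),
      k ∈ signBlock Ustar (s i) → l ∈ signBlock Ustar (s i) →
      ∀ j, 0 < Ustar k j * Ustar l j := by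
    intro i k l hk hl j
    by_cases hb : s i j = true
    · exact mul_pos ((hk j).mpr hb) ((hl j).mpr hb)
    · have h1 : Ustar k j < 0 :=
        (not_lt.mp fun c => hb ((hk j).mp c)).lt_of_ne (hnz k j)
      have h2 : Ustar l j < 0 :=
        (not_lt.mp fun c => hb ((hl j).mp c)).lt_of_ne (hnz l j)
      exact mul_pos_of_neg_of_neg h1 h2
  -- per-block orthogonal factor
  have key : ∀ i : Fin (2 ^ r), ∃ Q : Matrix (Fin r) (Fin r) ℝ,
      Qᵀ * Q = 1 ∧ Q * Qᵀ = 1 ∧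
      ∀ k ∈ signBlock Ustar (s i), ∀ j, U k j = ∑ a, Ustar k a * Q a j := by
    intro i
    haveI : Fintype ↥(signBlock Ustar (s i)) := Fintype.ofFinite _
    set V : Matrix ↥(signBlock Ustar (s i)) (Fin r) ℝ :=
      Matrix.of fun (k : ↥(signBlock Ustar (s i))) (j : Fin r) => Ustar k.1 j with hV
    set W : Matrix ↥(signBlock Ustar (s i)) (Fin r) ℝ :=
      Matrix.of fun (k : ↥(signBlock Ustar (s i))) (j : Fin r) => U k.1 j with hW
    have hrank : V.rank = r := hA1 i
    have hGdet : IsUnit (Vᵀ * V).det := by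
      apply aux_isUnit_det_of_rank
      rw [Matrix.rank_transpose_mul_self]
      exact hrank
    have hWV : W * Wᵀ = V * Vᵀ := by
      ext k l
      have h0 : 0 ≤ M k.1 l.1 := by
        rw [hMM]
        exact le_of_lt (Finset.sum_pos
          (fun j _ => hposterm i k.1 l.1 k.2 l.2 j) Finset.univ_nonempty)
      have := hobs k.1 l.1 h0
      simp only [Matrix.mul_apply, Matrix.transpose_apply, hV, hW, Matrix.of_apply]
      exact this
    obtain ⟨Q, hQ1, hQ2, hWQ⟩ := aux_exists_orth V W hGdet hWV
    refine ⟨Q, hQ1, hQ2, fun k hk j => ?_⟩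
    have := congrFun (congrFun hWQ ⟨k, hk⟩) j
    simpa [hV, hW, Matrix.mul_apply] using this
  choose Q hQo hQo' hQrow using key
  -- consecutive blocks share the same Q
  have hstep : ∀ (i : ℕ) (h : i + 1 < 2 ^ r),
      Q ⟨i + 1, h⟩ = Q ⟨i, Nat.lt_of_succ_lt h⟩ := by
    intro i h
    set i1 : Fin (2 ^ r) := ⟨i + 1, h⟩ with hi1
    set i0 : Fin (2 ^ r) := ⟨i, Nat.lt_of_succ_lt h⟩ with hi0
    have hXzero : Q i1 * (Q i0)ᵀ - 1 = 0 := by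
      apply aux_span_frob _ _ (hA2 i h)
      rintro A ⟨k, l, hk, hl, hc, rfl⟩
      have hobs' : ∑ j, U k j * U l j = ∑ j, Ustar k j * Ustar l j := by
        apply hobs
        rw [hMM]
        exact hc
      have hk' := hQrow i1 k hk
      have hl' := hQrow i0 l hl
      have e1 : ∑ a, ∑ b, (Ustar k a * Ustar l b) * ((Q i1 * (Q i0)ᵀ) a b)
          = ∑ j, U k j * U l j := by
        calc ∑ a, ∑ b, (Ustar k a * Ustar l b) * ((Q i1 * (Q i0)ᵀ) a b)
            = ∑ a, ∑ b, ∑ j, (Ustar k a * Q i1 a j) * (Ustar l b * Q i0 b j) := by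
              refine Finset.sum_congr rfl fun a _ => ?_
              refine Finset.sum_congr rfl fun b _ => ?_
              rw [Matrix.mul_apply, Finset.mul_sum]
              refine Finset.sum_congr rfl fun j _ => ?_
              simp only [Matrix.transpose_apply]
              ring
          _ = ∑ j, ∑ a, ∑ b, (Ustar k a * Q i1 a j) * (Ustar l b * Q i0 b j) := by
              exact (Finset.sum_congr rfl fun a _ => Finset.sum_comm).trans
                Finset.sum_comm
          _ = ∑ j, (∑ a, Ustar k a * Q i1 a j) * (∑ b, Ustar l b * Q i0 b j) := by
              refine Finset.sum_congr rfl fun j _ => ?_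
              rw [Finset.sum_mul_sum]
          _ = ∑ j, U k j * U l j := by
              refine Finset.sum_congr rfl fun j _ => ?_
              rw [← hk' j, ← hl' j]
      have e2 : ∑ a, ∑ b, (Ustar k a * Ustar l b) * ((1 : Matrix (Fin r) (Fin r) ℝ) a b)
          = ∑ j, Ustar k j * Ustar l j := by
        refine Finset.sum_congr rfl fun a _ => ?_
        simp [Matrix.one_apply, mul_ite]
      calc ∑ a, ∑ b, (Matrix.of fun a b => Ustar k a * Ustar l b) a b
              * ((Q i1 * (Q i0)ᵀ - 1) a b)
          = (∑ a, ∑ b, (Ustar k a * Ustar l b) * ((Q i1 * (Q i0)ᵀ) a b))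
            - ∑ a, ∑ b, (Ustar k a * Ustar l b) * ((1 : Matrix (Fin r) (Fin r) ℝ) a b) := by
            simp only [Matrix.of_apply, Matrix.sub_apply, mul_sub,
              Finset.sum_sub_distrib]
        _ = 0 := by rw [e1, e2, hobs', sub_self]
    have h1 : Q i1 * (Q i0)ᵀ = 1 := sub_eq_zero.mp hXzero
    calc Q i1 = Q i1 * ((Q i0)ᵀ * Q i0) := by rw [hQo, Matrix.mul_one]
      _ = (Q i1 * (Q i0)ᵀ) * Q i0 := by rw [Matrix.mul_assoc]
      _ = Q i0 := by rw [h1, Matrix.one_mul]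
  have h2r : 0 < 2 ^ r := Nat.pow_pos (by norm_num)
  set z : Fin (2 ^ r) := ⟨0, h2r⟩ with hz
  have hall : ∀ (m : ℕ) (hm : m < 2 ^ r), Q ⟨m, hm⟩ = Q z := by
    intro m
    induction m with
    | zero => intro hm; rfl
    | succ p ih =>
        intro hm
        rw [hstep p hm]
        exact ih (Nat.lt_of_succ_lt hm)
  have hallQ : ∀ i : Fin (2 ^ r), Q i = Q z := fun i => hall i.1 i.2
  have hUeq : U = Ustar * Q z := by
    ext k j
    have h1 := hQrow (idx k) k (hidx k) j
    rw [hallQ (idx k)] at h1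
    rw [h1, Matrix.mul_apply]
  refine ⟨Q z, hQo z, hUeq, ?_⟩
  rw [hUeq, Matrix.transpose_mul, Matrix.mul_assoc,
    ← Matrix.mul_assoc (Q z) (Q z)ᵀ Ustarᵀ, hQo' z, Matrix.one_mul]
end
end

section
/- Let n, r be positive integers with r ≤ n, let U* ∈ ℝ^{n×r} have all row entries nonzero, set M* = U* U*ᵀ and Ω = {(i,j) ∈ [n]×[n] : M*_{ij} ≥ 0}. Suppose Assumptions 1 and 2 hold. Then there exists γ > 0 such that for every D ∈ ℝ^{n×r} with U*ᵀ D = Dᵀ U* (i.e., D in the horizontal space at U*), ‖(U* Dᵀ + D U*ᵀ)_Ω‖_F² ≥ γ · ‖D‖_F². Consequently, the quadratic form D ↦ (1/2)‖(U* Dᵀ + D U*ᵀ)_Ω‖_F², which is the Hessian quadratic form of F(U) = (1/4)‖(U Uᵀ − M*)_Ω‖_F² at U*, is bounded below by (γ/2)‖D‖_F² on the horizontal space. -/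
open Matrix Classical

noncomputable section

lemma orth_of_rank {n r : ℕ} (U : Matrix (Fin n) (Fin r) ℝ) (S : Set (Fin n))
    (hrk : Matrix.rank (Matrix.of fun (k : ↥S) (j : Fin r) => U k.1 j) = r) :
    ∀ x : Fin r → ℝ, (∀ k ∈ S, (fun j => U k j) ⬝ᵥ x = 0) → x = 0 := by
  intro x hx
  set A : Matrix ↥S (Fin r) ℝ := Matrix.of fun (k : ↥S) (j : Fin r) => U k.1 j with hA
  have hker : LinearMap.ker A.mulVecLin = ⊥ := by
    have h1 := LinearMap.finrank_range_add_finrank_ker A.mulVecLin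
    rw [Module.finrank_fin_fun] at h1
    have h2 : Module.finrank ℝ (LinearMap.range A.mulVecLin) = r := hrk
    have h3 : Module.finrank ℝ (LinearMap.ker A.mulVecLin) = 0 := by omega
    exact Submodule.finrank_eq_zero.mp h3
  have hx0 : A.mulVecLin x = 0 := by
    funext k
    simpa [A, Matrix.mulVecLin, Matrix.mulVec, dotProduct] using hx k.1 k.2
  have := LinearMap.ker_eq_bot.mp hker
  exact this (by simpa using hx0)

lemma samesign {n r : ℕ} (U : Matrix (Fin n) (Fin r) ℝ) (hnz : ∀ k j, U k j ≠ 0)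
    (p : Fin r → Bool) {k l : Fin n} (hk : k ∈ signBlock U p) (hl : l ∈ signBlock U p) :
    0 ≤ ∑ j, U k j * U l j := by
  apply Finset.sum_nonneg
  intro j _
  rcases Bool.eq_false_or_eq_true (p j) with hp | hp
  swap
  · have h1 : U k j < 0 := by
      rcases (hnz k j).lt_or_gt with h | h
      · exact h
      · rw [(hk j).mp h] at hp; exact absurd hp (by simp)
    have h2 : U l j < 0 := by
      rcases (hnz l j).lt_or_gt with h | h
      · exact h
      · rw [(hl j).mp h] at hp; exact absurd hp (by simp)
    exact le_of_lt (mul_pos_of_neg_of_neg h1 h2)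
  · exact le_of_lt (mul_pos ((hk j).mpr hp) ((hl j).mpr hp))

lemma memBlock {n r : ℕ} (U : Matrix (Fin n) (Fin r) ℝ) (hnz : ∀ k j, U k j ≠ 0)
    {s : Fin (2 ^ r) → Fin r → Bool} (hs : Function.Surjective s) (k : Fin n) :
    ∃ i, k ∈ signBlock U (s i) := by
  obtain ⟨i, hi⟩ := hs (fun j => decide (0 < U k j))
  exact ⟨i, fun j => by rw [hi]; simp⟩

lemma block_skew {n r : ℕ} (U D : Matrix (Fin n) (Fin r) ℝ) (S : Set (Fin n))
    (horth : ∀ x : Fin r → ℝ, (∀ k ∈ S, (fun j => U k j) ⬝ᵥ x = 0) → x = 0)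
    (hsame : ∀ k ∈ S, ∀ l ∈ S, 0 ≤ ∑ j, U k j * U l j)
    (hobs : ∀ k l : Fin n, 0 ≤ ∑ j, U k j * U l j →
      (fun j => U k j) ⬝ᵥ (fun j => D l j) + (fun j => D k j) ⬝ᵥ (fun j => U l j) = 0) :
    ∃ B : Matrix (Fin r) (Fin r) ℝ, Bᵀ = -B ∧
      ∀ k ∈ S, (fun j => D k j) = B *ᵥ (fun j => U k j) := by
  classical
  set SF : Finset (Fin n) := Finset.univ.filter (fun k => k ∈ S) with hSF
  have hmemSF : ∀ k, k ∈ SF ↔ k ∈ S := by intro k; simp [hSF]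
  set G : Matrix (Fin r) (Fin r) ℝ := Matrix.of fun a b => ∑ k ∈ SF, U k a * U k b with hG
  set C : Matrix (Fin r) (Fin r) ℝ := Matrix.of fun a b => ∑ k ∈ SF, U k a * D k b with hC
  -- structure of G *ᵥ x and C *ᵥ x
  have hGv : ∀ x : Fin r → ℝ, G *ᵥ x = fun a => ∑ k ∈ SF, U k a * ((fun j => U k j) ⬝ᵥ x) := by
    intro x; funext a
    simp only [Matrix.mulVec, dotProduct, hG, Matrix.of_apply, Finset.sum_mul, Finset.mul_sum,
      mul_assoc]
    exact Finset.sum_comm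
  have hCv : ∀ x : Fin r → ℝ, C *ᵥ x = fun a => ∑ k ∈ SF, U k a * ((fun j => D k j) ⬝ᵥ x) := by
    intro x; funext a
    simp only [Matrix.mulVec, dotProduct, hC, Matrix.of_apply, Finset.sum_mul, Finset.mul_sum,
      mul_assoc]
    exact Finset.sum_comm
  -- G is invertible
  have hGinj : ∀ x : Fin r → ℝ, G *ᵥ x = 0 → x = 0 := by
    intro x hx
    have hq : ∑ k ∈ SF, ((fun j => U k j) ⬝ᵥ x) ^ 2 = x ⬝ᵥ (G *ᵥ x) := by
      rw [hGv]
      simp only [dotProduct, Finset.mul_sum]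
      rw [Finset.sum_comm]
      refine Finset.sum_congr rfl fun k _ => ?_
      rw [pow_two, Finset.sum_mul_sum]
      exact Finset.sum_congr rfl fun a _ => Finset.sum_congr rfl fun b _ => by ring
    rw [hx, dotProduct_zero] at hq
    have hz : ∀ k ∈ SF, ((fun j => U k j) ⬝ᵥ x) ^ 2 = 0 := by
      intro k hk
      have := (Finset.sum_eq_zero_iff_of_nonneg (fun k _ => sq_nonneg _)).mp hq
      exact this k hk
    apply horth
    intro k hk
    have := hz k ((hmemSF k).mpr hk)
    exact pow_eq_zero_iff (by norm_num) |>.mp this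
  have hGunit : IsUnit G := by
    rw [← Matrix.mulVec_injective_iff_isUnit]
    intro x y hxy
    have : G *ᵥ (x - y) = 0 := by rw [Matrix.mulVec_sub, hxy, sub_self]
    have := hGinj _ this
    exact sub_eq_zero.mp this
  have hGinvG : G⁻¹ * G = 1 := Matrix.nonsing_inv_mul G ((Matrix.isUnit_iff_isUnit_det G).mp hGunit)
  set B : Matrix (Fin r) (Fin r) ℝ := -(G⁻¹ * C) with hB
  -- the key identity : for l ∈ S, G *ᵥ (D l) = -(C *ᵥ (U l))
  have hGd : ∀ l ∈ S, G *ᵥ (fun b => D l b) = -(C *ᵥ (fun b => U l b)) := by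
    intro l hl
    rw [hGv, hCv]
    funext a
    simp only [Pi.neg_apply, ← Finset.sum_neg_distrib, ← mul_neg]
    refine Finset.sum_congr rfl fun k hk => ?_
    congr 1
    have h0 := hobs k l (hsame k ((hmemSF k).mp hk) l hl)
    linarith [h0]
  -- row formula
  have hrow : ∀ k ∈ S, (fun j => D k j) = B *ᵥ (fun j => U k j) := by
    intro k hk
    rw [hB, Matrix.neg_mulVec, ← Matrix.mulVec_mulVec, ← Matrix.mulVec_neg, ← hGd k hk,
      Matrix.mulVec_mulVec, hGinvG, Matrix.one_mulVec]
  -- skewness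
  have hskew : Bᵀ = -B := by
    have hM1 : ∀ l ∈ S, (B + Bᵀ) *ᵥ (fun j => U l j) = 0 := by
      intro l hl
      apply horth
      intro k hk
      have h0 := hobs k l (hsame k hk l hl)
      rw [hrow k hk, hrow l hl] at h0
      calc (fun j => U k j) ⬝ᵥ ((B + Bᵀ) *ᵥ fun j => U l j)
          = (fun j => U k j) ⬝ᵥ (B *ᵥ fun j => U l j) +
            (fun j => U k j) ⬝ᵥ (Bᵀ *ᵥ fun j => U l j) := by
            rw [Matrix.add_mulVec, dotProduct_add]
        _ = (fun j => U k j) ⬝ᵥ (B *ᵥ fun j => U l j) +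
            (B *ᵥ fun j => U k j) ⬝ᵥ (fun j => U l j) := by
            congr 1
            rw [Matrix.dotProduct_mulVec, Matrix.vecMul_transpose]
        _ = 0 := h0
    have hM0 : B + Bᵀ = 0 := by
      ext a b
      have hrow0 : (fun c => (B + Bᵀ) a c) = 0 := by
        apply horth
        intro l hl
        have := congrFun (hM1 l hl) a
        simp only [Matrix.mulVec, dotProduct, Pi.zero_apply] at this ⊢
        rw [← this]
        exact Finset.sum_congr rfl fun c _ => by ring
      have := congrFun hrow0 b
      simpa using this
    ext a b
    have := congrFun (congrFun hM0 a) b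
    simp only [Matrix.add_apply, Matrix.transpose_apply, Matrix.zero_apply] at this
    simp only [Matrix.transpose_apply, Matrix.neg_apply]
    linarith
  exact ⟨B, hskew, hrow⟩

lemma key_inj {n r : ℕ} (U D : Matrix (Fin n) (Fin r) ℝ) (hnz : ∀ k j, U k j ≠ 0)
    (s : Fin (2 ^ r) → Fin r → Bool) (hs : Function.Bijective s)
    (hA1 : Assumption1 U s) (hA2 : Assumption2 U s)
    (hH : Uᵀ * D = Dᵀ * U)
    (hobs : ∀ k l : Fin n, 0 ≤ ∑ j, U k j * U l j →
      (∑ j, U k j * D l j) + (∑ j, D k j * U l j) = 0) : D = 0 := by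
  classical
  have hobs' : ∀ k l : Fin n, 0 ≤ ∑ j, U k j * U l j →
      (fun j => U k j) ⬝ᵥ (fun j => D l j) + (fun j => D k j) ⬝ᵥ (fun j => U l j) = 0 := by
    intro k l h; simpa [dotProduct] using hobs k l h
  have hBex : ∀ i : Fin (2 ^ r), ∃ B : Matrix (Fin r) (Fin r) ℝ, Bᵀ = -B ∧
      ∀ k ∈ signBlock U (s i), (fun j => D k j) = B *ᵥ (fun j => U k j) :=
    fun i => block_skew U D _ (orth_of_rank U _ (hA1 i))
      (fun k hk l hl => samesign U hnz (s i) hk hl) hobs'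
  choose B hskew hrow using hBex
  have h0r : 0 < 2 ^ r := pow_pos (by norm_num) r
  -- consecutive blocks share the same skew matrix
  have hstep : ∀ (m : ℕ) (h : m + 1 < 2 ^ r),
      B ⟨m + 1, h⟩ = B ⟨m, Nat.lt_of_succ_lt h⟩ := by
    intro m h
    set M : Matrix (Fin r) (Fin r) ℝ :=
      B ⟨m, Nat.lt_of_succ_lt h⟩ - B ⟨m + 1, h⟩ with hM
    let φ : Matrix (Fin r) (Fin r) ℝ →ₗ[ℝ] ℝ :=
      { toFun := fun A => ∑ a, ∑ b, A a b * M a b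
        map_add' := by
          intro A A'; simp [Matrix.add_apply, add_mul, Finset.sum_add_distrib]
        map_smul' := by
          intro c A; simp [Matrix.smul_apply, smul_eq_mul, Finset.mul_sum, mul_assoc] }
    have hsub : {A : Matrix (Fin r) (Fin r) ℝ |
        ∃ k l : Fin n, k ∈ signBlock U (s ⟨m + 1, h⟩) ∧
          l ∈ signBlock U (s ⟨m, Nat.lt_of_succ_lt h⟩) ∧
          0 ≤ ∑ j, U k j * U l j ∧
          A = Matrix.of fun a b => U k a * U l b} ⊆ (LinearMap.ker φ : Set _) := by
      rintro A ⟨k, l, hk, hl, hge, rfl⟩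
      have h0 := hobs' k l hge
      rw [hrow ⟨m + 1, h⟩ k hk, hrow ⟨m, Nat.lt_of_succ_lt h⟩ l hl] at h0
      have hφ : φ (Matrix.of fun a b => U k a * U l b) =
          (fun j => U k j) ⬝ᵥ (M *ᵥ (fun j => U l j)) := by
        simp only [φ, LinearMap.coe_mk, AddHom.coe_mk, Matrix.of_apply, dotProduct,
          Matrix.mulVec]
        refine Finset.sum_congr rfl fun a _ => ?_
        rw [Finset.mul_sum]
        exact Finset.sum_congr rfl fun b _ => by ring
      have e1 : (fun j => U k j) ⬝ᵥ (M *ᵥ (fun j => U l j)) =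
          (fun j => U k j) ⬝ᵥ (B ⟨m, Nat.lt_of_succ_lt h⟩ *ᵥ (fun j => U l j)) -
          (fun j => U k j) ⬝ᵥ (B ⟨m + 1, h⟩ *ᵥ (fun j => U l j)) := by
        rw [hM, Matrix.sub_mulVec, dotProduct_sub]
      have e2 : (fun j => U k j) ⬝ᵥ (B ⟨m + 1, h⟩ *ᵥ (fun j => U l j)) =
          -((B ⟨m + 1, h⟩ *ᵥ fun j => U k j) ⬝ᵥ (fun j => U l j)) := by
        have hB1 : B ⟨m + 1, h⟩ = -(B ⟨m + 1, h⟩)ᵀ := by rw [hskew ⟨m + 1, h⟩]; simp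
        calc (fun j => U k j) ⬝ᵥ (B ⟨m + 1, h⟩ *ᵥ (fun j => U l j))
            = (fun j => U k j) ⬝ᵥ (-(B ⟨m + 1, h⟩)ᵀ *ᵥ (fun j => U l j)) := by rw [← hB1]
          _ = -((fun j => U k j) ⬝ᵥ ((B ⟨m + 1, h⟩)ᵀ *ᵥ (fun j => U l j))) := by
              rw [Matrix.neg_mulVec, dotProduct_neg]
          _ = -((B ⟨m + 1, h⟩ *ᵥ fun j => U k j) ⬝ᵥ (fun j => U l j)) := by
              rw [Matrix.dotProduct_mulVec, Matrix.vecMul_transpose]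
      have : φ (Matrix.of fun a b => U k a * U l b) = 0 := by
        rw [hφ, e1, e2]; linarith [h0]
      simpa [LinearMap.mem_ker] using this
    have htop : (⊤ : Submodule ℝ (Matrix (Fin r) (Fin r) ℝ)) ≤ LinearMap.ker φ :=
      (hA2 m h) ▸ Submodule.span_le.mpr hsub
    have hMker : φ M = 0 := LinearMap.mem_ker.mp (htop Submodule.mem_top)
    have hM0 : M = 0 := by
      have hMsum : ∑ a, ∑ b, M a b * M a b = 0 := hMker
      ext a b
      have h1 := (Finset.sum_eq_zero_iff_of_nonneg
        (fun a _ => Finset.sum_nonneg fun b _ => mul_self_nonneg (M a b))).mp hMsum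
        a (Finset.mem_univ a)
      have h2 := (Finset.sum_eq_zero_iff_of_nonneg
        (fun b _ => mul_self_nonneg (M a b))).mp h1 b (Finset.mem_univ b)
      simpa using mul_self_eq_zero.mp h2
    have := sub_eq_zero.mp (hM ▸ hM0)
    exact this.symm
  -- all skew matrices are equal
  have hall : ∀ (m : ℕ) (hm : m < 2 ^ r), B ⟨m, hm⟩ = B ⟨0, h0r⟩ := by
    intro m
    induction m with
    | zero => intro hm; rfl
    | succ p ih => intro hm; rw [hstep p hm]; exact ih _
  set B0 : Matrix (Fin r) (Fin r) ℝ := B ⟨0, h0r⟩ with hB0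
  have hskew0 : B0ᵀ = -B0 := hskew _
  have hD : ∀ k, (fun j => D k j) = B0 *ᵥ (fun j => U k j) := by
    intro k
    obtain ⟨i, hk⟩ := memBlock U hnz hs.2 k
    have hBi : B i = B0 := hall i.1 i.2
    rw [hrow i k hk, hBi]
  have hDU : D = U * B0ᵀ := by
    ext k a
    have := congrFun (hD k) a
    simp only [Matrix.mulVec, dotProduct] at this
    rw [this, Matrix.mul_apply]
    exact Finset.sum_congr rfl fun b _ => by simp [Matrix.transpose_apply]; ring
  set G : Matrix (Fin r) (Fin r) ℝ := Uᵀ * U with hGdef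
  have hGBrel : G * B0 = -(B0 * G) := by
    have h1 : Uᵀ * (U * B0ᵀ) = (U * B0ᵀ)ᵀ * U := by rw [← hDU]; exact hH
    rw [Matrix.transpose_mul, Matrix.transpose_transpose, hskew0] at h1
    have hg1 : G * B0 = Uᵀ * (U * B0) := by rw [hGdef, Matrix.mul_assoc]
    have h2 : Uᵀ * (U * -B0) = -(Uᵀ * (U * B0)) := by rw [Matrix.mul_neg, Matrix.mul_neg]
    rw [h2] at h1
    have h3 : B0 * Uᵀ * U = B0 * G := by rw [hGdef, Matrix.mul_assoc]
    rw [h3] at h1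
    rw [hg1]
    exact neg_eq_iff_eq_neg.mp h1
  have hX : trace (G * B0 * B0) = 0 := by
    have hc : trace (G * B0 * B0) = -trace (G * B0 * B0) := by
      calc trace (G * B0 * B0) = trace (-(B0 * G) * B0) := by rw [hGBrel]
        _ = -trace ((B0 * G) * B0) := by rw [Matrix.neg_mul, Matrix.trace_neg]
        _ = -trace (B0 * (G * B0)) := by rw [Matrix.mul_assoc]
        _ = -trace ((G * B0) * B0) := by rw [Matrix.trace_mul_comm]
    linarith
  have hY : trace (B0 * G * B0ᵀ) = 0 := by
    calc trace (B0 * G * B0ᵀ) = trace (B0 * G * (-B0)) := by rw [hskew0]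
      _ = -trace (B0 * G * B0) := by rw [Matrix.mul_neg, Matrix.trace_neg]
      _ = -trace (B0 * (G * B0)) := by rw [Matrix.mul_assoc]
      _ = -trace ((G * B0) * B0) := by rw [Matrix.trace_mul_comm]
      _ = 0 := by rw [hX, neg_zero]
  have hDtD : Dᵀ * D = B0 * G * B0ᵀ := by
    rw [hDU, Matrix.transpose_mul, Matrix.transpose_transpose, hGdef]
    rw [Matrix.mul_assoc, ← Matrix.mul_assoc Uᵀ U B0ᵀ, ← Matrix.mul_assoc]
  have hsum : ∑ a, ∑ k, (D k a) * (D k a) = 0 := by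
    have ht : trace (Dᵀ * D) = ∑ a, ∑ k, (D k a) * (D k a) := by
      simp [Matrix.trace, Matrix.diag, Matrix.mul_apply, Matrix.transpose_apply]
    rw [hDtD, hY] at ht
    linarith
  ext k a
  have h1 := (Finset.sum_eq_zero_iff_of_nonneg
    (fun a _ => Finset.sum_nonneg fun k _ => mul_self_nonneg (D k a))).mp hsum
    a (Finset.mem_univ a)
  have h2 := (Finset.sum_eq_zero_iff_of_nonneg
    (fun k _ => mul_self_nonneg (D k a))).mp h1 k (Finset.mem_univ k)
  simpa using mul_self_eq_zero.mp h2

def Tmap {n r : ℕ} (U : Matrix (Fin n) (Fin r) ℝ) :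
    EuclideanSpace ℝ (Fin n × Fin r) →ₗ[ℝ] EuclideanSpace ℝ (Fin n × Fin n) where
  toFun x := WithLp.toLp 2 fun p : Fin n × Fin n => if 0 ≤ ∑ j, U p.1 j * U p.2 j then
      (∑ j, U p.1 j * x (p.2, j)) + ∑ j, x (p.1, j) * U p.2 j else 0
  map_add' x y := by
    ext p
    simp only [PiLp.add_apply, PiLp.toLp_apply]
    split_ifs with hp
    · rw [show ∀ u v w z : ℝ, (u + v) + (w + z) = (u + w) + (v + z) from fun u v w z => by ring]
      congr 1 <;>
        · rw [← Finset.sum_add_distrib]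
          exact Finset.sum_congr rfl fun j _ => by ring
    · simp
  map_smul' c x := by
    ext p
    simp only [PiLp.smul_apply, PiLp.toLp_apply, smul_eq_mul, RingHom.id_apply]
    split_ifs with hp
    · rw [mul_add, Finset.mul_sum, Finset.mul_sum]
      congr 1 <;> exact Finset.sum_congr rfl fun j _ => by ring
    · simp

lemma Tmap_apply {n r : ℕ} (U : Matrix (Fin n) (Fin r) ℝ)
    (x : EuclideanSpace ℝ (Fin n × Fin r)) (p : Fin n × Fin n) :
    Tmap U x p = if 0 ≤ ∑ j, U p.1 j * U p.2 j then
      (∑ j, U p.1 j * x (p.2, j)) + ∑ j, x (p.1, j) * U p.2 j else 0 := rfl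

def Hsub {n r : ℕ} (U : Matrix (Fin n) (Fin r) ℝ) :
    Submodule ℝ (EuclideanSpace ℝ (Fin n × Fin r)) where
  carrier := {x | ∀ a b, ∑ k, U k a * x (k, b) = ∑ k, x (k, a) * U k b}
  add_mem' := by
    intro x y hx hy a b
    simp only [PiLp.add_apply, mul_add, add_mul, Finset.sum_add_distrib]
    rw [hx a b, hy a b]
  zero_mem' := by intro a b; simp [PiLp.zero_apply]
  smul_mem' := by
    intro c x hx a b
    simp only [PiLp.smul_apply, smul_eq_mul]
    have h1 : ∑ k, U k a * (c * x (k, b)) = c * ∑ k, U k a * x (k, b) := by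
      rw [Finset.mul_sum]; exact Finset.sum_congr rfl fun k _ => by ring
    have h2 : ∑ k, (c * x (k, a)) * U k b = c * ∑ k, x (k, a) * U k b := by
      rw [Finset.mul_sum]; exact Finset.sum_congr rfl fun k _ => by ring
    rw [h1, h2, hx a b]

lemma mem_Hsub {n r : ℕ} (U : Matrix (Fin n) (Fin r) ℝ) (x : EuclideanSpace ℝ (Fin n × Fin r)) :
    x ∈ Hsub U ↔ ∀ a b, ∑ k, U k a * x (k, b) = ∑ k, x (k, a) * U k b := Iff.rfl

/-- under ReLU sampling and Assumptions 1 and 2, there is `γ > 0` with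
`‖(U* Dᵀ + D U*ᵀ)_Ω‖_F² ≥ γ ‖D‖_F²` for every `D` in the horizontal space at `U*`;
consequently the Hessian quadratic form `D ↦ (1/2)‖(U* Dᵀ + D U*ᵀ)_Ω‖_F²` of `F` at `U*`
is bounded below by `(γ/2)‖D‖_F²` there. -/
theorem statement7 {n r : ℕ} (hn : 0 < n) (hr : 0 < r) (hrn : r ≤ n)
    (Ustar : Matrix (Fin n) (Fin r) ℝ) (hnz : ∀ k j, Ustar k j ≠ 0)
    (s : Fin (2 ^ r) → Fin r → Bool) (hs : IsGrayCode s)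
    (hA1 : Assumption1 Ustar s) (hA2 : Assumption2 Ustar s) :
    ∃ γ : ℝ, 0 < γ ∧
      ∀ D : Matrix (Fin n) (Fin r) ℝ, Ustarᵀ * D = Dᵀ * Ustar →
        γ * frobNorm D ^ 2 ≤
            frobNorm (mask (reluSet (Ustar * Ustarᵀ)) (Ustar * Dᵀ + D * Ustarᵀ)) ^ 2 ∧
          (γ / 2) * frobNorm D ^ 2 ≤
            (1 / 2) *
              frobNorm (mask (reluSet (Ustar * Ustarᵀ)) (Ustar * Dᵀ + D * Ustarᵀ)) ^ 2 := by
  classical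
  have hker : LinearMap.ker ((Tmap Ustar).domRestrict (Hsub Ustar)) = ⊥ := by
    rw [LinearMap.ker_eq_bot']
    intro x hx0
    have hTx : ∀ p : Fin n × Fin n, Tmap Ustar (x : EuclideanSpace ℝ (Fin n × Fin r)) p = 0 := by
      intro p
      have h : Tmap Ustar (x : EuclideanSpace ℝ (Fin n × Fin r)) = 0 := by
        simpa [LinearMap.domRestrict_apply] using hx0
      rw [h]; rfl
    set D : Matrix (Fin n) (Fin r) ℝ :=
      Matrix.of fun k j => (x : EuclideanSpace ℝ (Fin n × Fin r)) (k, j) with hDdef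
    have hH : Ustarᵀ * D = Dᵀ * Ustar := by
      ext a b
      have hm := (mem_Hsub Ustar _).mp x.2 a b
      simp only [Matrix.mul_apply, Matrix.transpose_apply, hDdef, Matrix.of_apply]
      exact hm
    have hobs : ∀ k l : Fin n, 0 ≤ ∑ j, Ustar k j * Ustar l j →
        (∑ j, Ustar k j * D l j) + (∑ j, D k j * Ustar l j) = 0 := by
      intro k l hkl
      have h := hTx (k, l)
      rw [Tmap_apply] at h
      rw [if_pos hkl] at h
      exact h
    have hD0 := key_inj Ustar D hnz s hs.1 hA1 hA2 hH hobs
    apply Subtype.ext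
    ext p
    have := congrFun (congrFun hD0 p.1) p.2
    simpa [hDdef] using this
  obtain ⟨K, hK0, hKf⟩ := LinearMap.exists_antilipschitzWith _ hker
  have hKpos : (0 : ℝ) < (K : ℝ) := hK0
  refine ⟨((K : ℝ) ^ 2)⁻¹, by positivity, ?_⟩
  intro D hH
  have hxV : (WithLp.toLp 2 (fun p : Fin n × Fin r => D p.1 p.2) : EuclideanSpace ℝ (Fin n × Fin r)) ∈ Hsub Ustar := by
    rw [mem_Hsub]
    intro a b
    have := congrFun (congrFun hH a) b
    simpa [Matrix.mul_apply, Matrix.transpose_apply] using this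
  set xe : Hsub Ustar := ⟨(WithLp.toLp 2 (fun p : Fin n × Fin r => D p.1 p.2) : EuclideanSpace ℝ (Fin n × Fin r)), hxV⟩ with hxe
  have key : ‖xe‖ ≤ (K : ℝ) * ‖(Tmap Ustar).domRestrict (Hsub Ustar) xe‖ := by
    have h := hKf.le_mul_dist xe 0
    simpa [dist_zero_right, map_zero] using h
  have hnx : ‖xe‖ = frobNorm D := by
    rw [hxe, Submodule.coe_norm, EuclideanSpace.norm_eq, frobNorm]
    congr 1
    rw [Fintype.sum_prod_type]
    simp [Real.norm_eq_abs, sq_abs]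
  have hnT : ‖(Tmap Ustar).domRestrict (Hsub Ustar) xe‖ =
      frobNorm (mask (reluSet (Ustar * Ustarᵀ)) (Ustar * Dᵀ + D * Ustarᵀ)) := by
    rw [LinearMap.domRestrict_apply, EuclideanSpace.norm_eq, frobNorm]
    congr 1
    rw [Fintype.sum_prod_type]
    refine Finset.sum_congr rfl fun a _ => Finset.sum_congr rfl fun b _ => ?_
    rw [Real.norm_eq_abs, sq_abs]
    congr 1
  have hfd : frobNorm D ≤ (K : ℝ) *
      frobNorm (mask (reluSet (Ustar * Ustarᵀ)) (Ustar * Dᵀ + D * Ustarᵀ)) := by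
    rw [← hnx, ← hnT]; exact key
  have h0m : 0 ≤ frobNorm (mask (reluSet (Ustar * Ustarᵀ)) (Ustar * Dᵀ + D * Ustarᵀ)) :=
    Real.sqrt_nonneg _
  have h0d : 0 ≤ frobNorm D := Real.sqrt_nonneg _
  have hsq : frobNorm D ^ 2 ≤ (K : ℝ) ^ 2 *
      frobNorm (mask (reluSet (Ustar * Ustarᵀ)) (Ustar * Dᵀ + D * Ustarᵀ)) ^ 2 := by
    nlinarith
  have h1 : ((K : ℝ) ^ 2)⁻¹ * frobNorm D ^ 2 ≤
      frobNorm (mask (reluSet (Ustar * Ustarᵀ)) (Ustar * Dᵀ + D * Ustarᵀ)) ^ 2 := by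
    have hK2 : (0 : ℝ) < (K : ℝ) ^ 2 := by positivity
    calc ((K : ℝ) ^ 2)⁻¹ * frobNorm D ^ 2
        ≤ ((K : ℝ) ^ 2)⁻¹ * ((K : ℝ) ^ 2 *
          frobNorm (mask (reluSet (Ustar * Ustarᵀ)) (Ustar * Dᵀ + D * Ustarᵀ)) ^ 2) :=
          mul_le_mul_of_nonneg_left hsq (by positivity)
      _ = frobNorm (mask (reluSet (Ustar * Ustarᵀ)) (Ustar * Dᵀ + D * Ustarᵀ)) ^ 2 := by
          field_simp
  exact ⟨h1, by linarith⟩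
end
end

section
/- Let U, U* ∈ ℝ^{n×r} and let Uᵀ U* = P Σ Qᵀ be a singular value decomposition, where P, Q ∈ ℝ^{r×r} are orthogonal and Σ ∈ ℝ^{r×r} is diagonal with nonnegative entries. Define the aligned matrix Ũ = U P Qᵀ and D = Ũ − U*. Then U*ᵀ D = Dᵀ U*, i.e., D lies in the horizontal space {E ∈ ℝ^{n×r} : U*ᵀ E = Eᵀ U*}; equivalently, ⟨U* V, Ũ − U*⟩ = 0 for every skew-symmetric V ∈ ℝ^{r×r}. -/
open Matrix Classical

noncomputable section

lemma frobInner_eq_trace {m k : Type*} [Fintype m] [Fintype k]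
    (A B : Matrix m k ℝ) : frobInner A B = Matrix.trace (Aᵀ * B) := by
  simp [frobInner, Matrix.trace, Matrix.mul_apply, Matrix.diag]
  exact Finset.sum_comm

/-- if `Uᵀ U* = P S Qᵀ` is an SVD (P, Q orthogonal, S diagonal with
nonnegative entries), then the aligned difference `D = U P Qᵀ − U*` lies in the
horizontal space at `U*`: `U*ᵀ D = Dᵀ U*`; equivalently `⟨U* V, D⟩ = 0` for every
skew-symmetric `V`. -/
theorem statement8 {n r : ℕ} (U Ustar : Matrix (Fin n) (Fin r) ℝ)
    (P Q S : Matrix (Fin r) (Fin r) ℝ)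
    (hP : Pᵀ * P = 1) (hQ : Qᵀ * Q = 1)
    (hSdiag : S.IsDiag) (hSnn : ∀ i, 0 ≤ S i i)
    (hSVD : Uᵀ * Ustar = P * S * Qᵀ) :
    Ustarᵀ * (U * P * Qᵀ - Ustar) = (U * P * Qᵀ - Ustar)ᵀ * Ustar ∧
      ∀ V : Matrix (Fin r) (Fin r) ℝ, V + Vᵀ = 0 →
        frobInner (Ustar * V) (U * P * Qᵀ - Ustar) = 0 := by
  have hS : Sᵀ = S := by
    ext i j
    rcases eq_or_ne i j with h | h
    · subst h; rfl
    · simp [Matrix.transpose_apply, hSdiag h, hSdiag (Ne.symm h)]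
  have h1 : Ustarᵀ * U = Q * S * Pᵀ := by
    have := congrArg Matrix.transpose hSVD
    simpa [Matrix.transpose_mul, hS, Matrix.mul_assoc] using this
  have key : Ustarᵀ * (U * P * Qᵀ - Ustar) = (U * P * Qᵀ - Ustar)ᵀ * Ustar := by
    have lhs : Ustarᵀ * (U * P * Qᵀ) = Q * S * Qᵀ := by
      calc Ustarᵀ * (U * P * Qᵀ) = (Ustarᵀ * U) * P * Qᵀ := by
            rw [Matrix.mul_assoc, Matrix.mul_assoc, Matrix.mul_assoc]
        _ = Q * S * (Pᵀ * P) * Qᵀ := by rw [h1]; simp [Matrix.mul_assoc]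
        _ = Q * S * Qᵀ := by rw [hP, Matrix.mul_one]
    have rhs : (U * P * Qᵀ)ᵀ * Ustar = Q * S * Qᵀ := by
      calc (U * P * Qᵀ)ᵀ * Ustar = Q * (Pᵀ * (Uᵀ * Ustar)) := by
            simp [Matrix.transpose_mul, Matrix.mul_assoc]
        _ = Q * (Pᵀ * P * (S * Qᵀ)) := by rw [hSVD, Matrix.mul_assoc, Matrix.mul_assoc]
        _ = Q * S * Qᵀ := by rw [hP, Matrix.one_mul, Matrix.mul_assoc]
    rw [Matrix.mul_sub, Matrix.transpose_sub, Matrix.sub_mul, lhs, rhs]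
  refine ⟨key, ?_⟩
  intro V hV
  set D := U * P * Qᵀ - Ustar with hD
  have hVt : Vᵀ = -V := eq_neg_of_add_eq_zero_right hV
  have hMsym : Ustarᵀ * D = (Ustarᵀ * D)ᵀ := by
    rw [Matrix.transpose_mul, Matrix.transpose_transpose]; exact key
  have htr : Matrix.trace (Vᵀ * (Ustarᵀ * D)) = 0 := by
    have e1 : Matrix.trace (Vᵀ * (Ustarᵀ * D)) = -Matrix.trace (V * (Ustarᵀ * D)) := by
      rw [hVt]; simp
    have e2 : Matrix.trace (Vᵀ * (Ustarᵀ * D)) = Matrix.trace (V * (Ustarᵀ * D)) := by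
      conv_lhs => rw [hMsym, ← Matrix.transpose_mul, Matrix.trace_transpose,
        Matrix.trace_mul_comm]
    linarith
  rw [frobInner_eq_trace, Matrix.transpose_mul, Matrix.mul_assoc]
  exact htr
end
end
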